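/- Feasibility criterion via Farkas' lemma: let π̂ be a strictly positive probability vector on E = {1,…,ℓ} and L a 0-1 matrix on E. There exists a stochastic matrix P̂ with π̂ᵗP̂ = π̂ᵗ and P̂(t,s) = 0 whenever L(t,s) = 0, if and only if there do NOT exist vectors u, v ∈ ℝ^ℓ satisfying u(t) + v(s)π̂(t) ≥ 0 for all pairs (t,s) with L(t,s) = 1, and Σ_{r=1}^ℓ (u(r) + π̂(r) v(r)) < 0. -/

import Mathlib

open Finset

namespace Stmt8Aux

variable {ℓ : ℕ} (πh : Fin ℓ → ℝ) (L : Fin ℓ → Fin ℓ → Bool)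

/-- generator vectors -/
noncomputable def cv (p : Fin ℓ × Fin ℓ) : EuclideanSpace ℝ (Fin ℓ ⊕ Fin ℓ) :=
  (WithLp.equiv 2 _).symm fun i =>
    if L p.1 p.2 then
      Sum.elim (fun t => if t = p.1 then (1:ℝ) else 0)
               (fun s => if s = p.2 then πh p.1 else 0) i
    else 0

noncomputable def bv : EuclideanSpace ℝ (Fin ℓ ⊕ Fin ℓ) :=
  (WithLp.equiv 2 _).symm (Sum.elim (fun _ => (1:ℝ)) πh)

noncomputable def G : (Fin ℓ × Fin ℓ → ℝ) →ₗ[ℝ] EuclideanSpace ℝ (Fin ℓ ⊕ Fin ℓ) where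
  toFun y := ∑ p, y p • cv πh L p
  map_add' a b := by simp [add_smul, Finset.sum_add_distrib]
  map_smul' r a := by simp [smul_smul, Finset.smul_sum]

lemma esum_apply {α : Type*} (s : Finset α) (f : α → EuclideanSpace ℝ (Fin ℓ ⊕ Fin ℓ))
    (i : Fin ℓ ⊕ Fin ℓ) : (∑ p ∈ s, f p) i = ∑ p ∈ s, f p i := by
  induction s using Finset.cons_induction with
  | empty => simp [PiLp.zero_apply]
  | cons a s ha ih => rw [Finset.sum_cons, Finset.sum_cons, PiLp.add_apply, ih]

lemma G_apply_inl (y : Fin ℓ × Fin ℓ → ℝ) (t : Fin ℓ) :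
    G πh L y (Sum.inl t) = ∑ s, if L t s then y (t, s) else 0 := by
  show (∑ p, y p • cv πh L p) (Sum.inl t) = _
  rw [esum_apply, Fintype.sum_prod_type]
  rw [Finset.sum_comm]
  simp only [cv, PiLp.smul_apply, WithLp.equiv_symm_apply, WithLp.ofLp_toLp, smul_eq_mul, Sum.elim_inl,
    mul_ite, mul_one, mul_zero]
  refine Finset.sum_congr rfl fun x _ => ?_
  rw [Finset.sum_eq_single t]
  · simp
  · intro b _ hb; simp [Ne.symm hb]
  · simp

lemma G_apply_inr (y : Fin ℓ × Fin ℓ → ℝ) (s : Fin ℓ) :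
    G πh L y (Sum.inr s) = ∑ t, if L t s then πh t * y (t, s) else 0 := by
  show (∑ p, y p • cv πh L p) (Sum.inr s) = _
  rw [esum_apply, Fintype.sum_prod_type]
  simp only [cv, PiLp.smul_apply, WithLp.equiv_symm_apply, WithLp.ofLp_toLp, smul_eq_mul, Sum.elim_inr,
    mul_ite, mul_zero]
  refine Finset.sum_congr rfl fun x _ => ?_
  rw [Finset.sum_eq_single s]
  · simp [mul_comm]
  · intro b _ hb; simp [Ne.symm hb]
  · simp

lemma bv_apply_inl (t : Fin ℓ) : bv πh (Sum.inl t) = 1 := rfl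
lemma bv_apply_inr (s : Fin ℓ) : bv πh (Sum.inr s) = πh s := rfl

end Stmt8Aux

namespace Stmt8Aux

variable {ℓ : ℕ} (πh : Fin ℓ → ℝ) (L : Fin ℓ → Fin ℓ → Bool)

lemma eext {x y : EuclideanSpace ℝ (Fin ℓ ⊕ Fin ℓ)} (h : ∀ i, x i = y i) : x = y :=
  (WithLp.equiv 2 _).injective (funext h)

lemma cv_eq_zero {p : Fin ℓ × Fin ℓ} (h : L p.1 p.2 = false) : cv πh L p = 0 :=
  eext fun i => by simp [cv, WithLp.equiv_symm_apply, WithLp.ofLp_toLp, h, PiLp.zero_apply]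

noncomputable def S : ConvexCone ℝ (EuclideanSpace ℝ (Fin ℓ ⊕ Fin ℓ)) where
  carrier := {z | ∃ y : Fin ℓ × Fin ℓ → ℝ, (∀ p, 0 ≤ y p) ∧ G πh L y = z}
  smul_mem' := by
    rintro c hc z ⟨y, hy, rfl⟩
    exact ⟨c • y, fun p => mul_nonneg hc.le (hy p), (G πh L).map_smul c y⟩
  add_mem' := by
    rintro z ⟨y, hy, rfl⟩ z' ⟨y', hy', rfl⟩
    exact ⟨y + y', fun p => add_nonneg (hy p) (hy' p), map_add _ _ _⟩

lemma mem_S {z : EuclideanSpace ℝ (Fin ℓ ⊕ Fin ℓ)} :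
    z ∈ S πh L ↔ ∃ y : Fin ℓ × Fin ℓ → ℝ, (∀ p, 0 ≤ y p) ∧ G πh L y = z := Iff.rfl

lemma G_truncate (y : Fin ℓ × Fin ℓ → ℝ) :
    G πh L (fun p => if L p.1 p.2 then y p else 0) = G πh L y := by
  show (∑ p, _ • cv πh L p) = ∑ p, _ • cv πh L p
  refine Finset.sum_congr rfl fun p _ => ?_
  by_cases h : L p.1 p.2
  · simp [h]
  · rw [cv_eq_zero πh L (by simpa using h)]; simp

lemma crux (hb : bv πh ∈ closure ((S πh L : Set (EuclideanSpace ℝ (Fin ℓ ⊕ Fin ℓ))))) :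
    ∃ Ph : Fin ℓ → Fin ℓ → ℝ, (∀ t s, 0 ≤ Ph t s) ∧ (∀ t, ∑ s, Ph t s = 1) ∧
      (∀ s, ∑ t, πh t * Ph t s = πh s) ∧ (∀ t s, L t s = false → Ph t s = 0) := by
  obtain ⟨z, hz, hzlim⟩ := mem_closure_iff_seq_limit.mp hb
  choose y hy0 hyG using hz
  set yt : ℕ → (Fin ℓ × Fin ℓ → ℝ) := fun n p => if L p.1 p.2 then y n p else 0 with hyt
  have hytG : ∀ n, G πh L (yt n) = z n := fun n => (G_truncate πh L (y n)).trans (hyG n)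
  have hyt0 : ∀ n p, 0 ≤ yt n p := by
    intro n p; by_cases h : L p.1 p.2 <;> simp [hyt, h, hy0 n p]
  -- coordinatewise convergence
  have hcoord : ∀ i, Filter.Tendsto (fun n => z n i) Filter.atTop (nhds (bv πh i)) := by
    intro i
    have hc : Continuous (fun x : EuclideanSpace ℝ (Fin ℓ ⊕ Fin ℓ) => x i) :=
      (continuous_apply i).comp (PiLp.continuous_ofLp 2 _)
    exact (hc.tendsto _).comp hzlim
  -- total mass is bounded
  have hsum_eq : ∀ n, ∑ p, yt n p = ∑ t, z n (Sum.inl t) := by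
    intro n
    rw [Fintype.sum_prod_type]
    refine Finset.sum_congr rfl fun t _ => ?_
    rw [← hytG n, G_apply_inl]
    refine Finset.sum_congr rfl fun s _ => ?_
    by_cases h : L t s <;> simp [hyt, h]
  have hmass : Filter.Tendsto (fun n => ∑ p, yt n p) Filter.atTop
      (nhds (∑ t : Fin ℓ, bv πh (Sum.inl t))) := by
    simp only [hsum_eq]
    exact tendsto_finset_sum _ fun t _ => hcoord (Sum.inl t)
  obtain ⟨M, hM⟩ : ∃ M, ∀ n, ∑ p, yt n p ≤ M := by
    obtain ⟨M, hM⟩ := hmass.bddAbove_range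
    exact ⟨M, fun n => hM ⟨n, rfl⟩⟩
  -- compact set containing the sequence
  set T : Set (Fin ℓ × Fin ℓ → ℝ) :=
    {w | (∀ p, 0 ≤ w p) ∧ ∑ p, w p ≤ M} with hT
  have hTclosed : IsClosed T := by
    have h1 : IsClosed {w : Fin ℓ × Fin ℓ → ℝ | ∀ p, 0 ≤ w p} := by
      have : {w : Fin ℓ × Fin ℓ → ℝ | ∀ p, 0 ≤ w p} = ⋂ p, {w | 0 ≤ w p} := by
        ext w; simp [Set.mem_iInter]
      rw [this]
      exact isClosed_iInter fun p => isClosed_le continuous_const (continuous_apply p)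
    have h2 : IsClosed {w : Fin ℓ × Fin ℓ → ℝ | ∑ p, w p ≤ M} :=
      isClosed_le (continuous_finset_sum _ fun p _ => continuous_apply p) continuous_const
    exact h1.inter h2
  have hTsub : T ⊆ Set.pi Set.univ fun _ : Fin ℓ × Fin ℓ => Set.Icc (0:ℝ) M := by
    rintro w ⟨hw0, hwM⟩ p _
    exact ⟨hw0 p, le_trans (Finset.single_le_sum (fun q _ => hw0 q) (Finset.mem_univ p)) hwM⟩
  have hTcomp : IsCompact T :=
    IsCompact.of_isClosed_subset (isCompact_univ_pi fun _ => isCompact_Icc) hTclosed hTsub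
  have hmem : ∀ n, yt n ∈ T := fun n => ⟨hyt0 n, hM n⟩
  obtain ⟨w, hwT, φ, hφ, hwlim⟩ := hTcomp.tendsto_subseq hmem
  have hGc : Continuous (G πh L) := (G πh L).continuous_of_finiteDimensional
  have hlim1 : Filter.Tendsto (fun n => G πh L (yt (φ n))) Filter.atTop (nhds (G πh L w)) :=
    (hGc.tendsto w).comp hwlim
  have hlim2 : Filter.Tendsto (fun n => G πh L (yt (φ n))) Filter.atTop (nhds (bv πh)) := by
    simp only [hytG]
    exact hzlim.comp hφ.tendsto_atTop
  have hGw : G πh L w = bv πh := tendsto_nhds_unique hlim1 hlim2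
  have hw0 : ∀ p, 0 ≤ w p := hwT.1
  have hwz : ∀ p, L p.1 p.2 = false → w p = 0 := by
    intro p hp
    have h1 : Filter.Tendsto (fun n => yt (φ n) p) Filter.atTop (nhds (w p)) :=
      ((continuous_apply p).tendsto w).comp hwlim
    have h2 : (fun n => yt (φ n) p) = fun _ => 0 := by
      funext n; simp [hyt, hp]
    rw [h2] at h1
    exact (tendsto_nhds_unique tendsto_const_nhds h1).symm ▸ rfl
  refine ⟨fun t s => w (t, s), fun t s => hw0 _, ?_, ?_, fun t s h => hwz (t, s) h⟩
  · intro t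
    have := congrArg (fun x : EuclideanSpace ℝ (Fin ℓ ⊕ Fin ℓ) => x (Sum.inl t)) hGw
    simp only [G_apply_inl, bv_apply_inl] at this
    rw [← this]
    refine Finset.sum_congr rfl fun s _ => ?_
    by_cases h : L t s
    · simp [h]
    · simp only [Bool.not_eq_true] at h; simp [h, hwz (t, s) h]
  · intro s
    have := congrArg (fun x : EuclideanSpace ℝ (Fin ℓ ⊕ Fin ℓ) => x (Sum.inr s)) hGw
    simp only [G_apply_inr, bv_apply_inr] at this
    rw [← this]
    refine Finset.sum_congr rfl fun t _ => ?_
    by_cases h : L t s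
    · simp [h]
    · simp only [Bool.not_eq_true] at h; simp [h, hwz (t, s) h]

end Stmt8Aux

namespace Stmt8Aux

open scoped RealInnerProductSpace

variable {ℓ : ℕ} (πh : Fin ℓ → ℝ) (L : Fin ℓ → Fin ℓ → Bool)

lemma cv_mem_S (t s : Fin ℓ) : cv πh L (t, s) ∈ S πh L := by
  refine ⟨fun p => if p = (t, s) then 1 else 0, fun p => by positivity, ?_⟩
  show (∑ p, _ • cv πh L p) = cv πh L (t, s)
  simp [ite_smul, Finset.sum_ite_eq']

lemma inner_cv (y : EuclideanSpace ℝ (Fin ℓ ⊕ Fin ℓ)) {t s : Fin ℓ} (h : L t s = true) :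
    ⟪cv πh L (t, s), y⟫ = y (Sum.inl t) + πh t * y (Sum.inr s) := by
  rw [PiLp.inner_apply, Fintype.sum_sum_type]
  simp [RCLike.inner_apply, cv, WithLp.equiv_symm_apply, WithLp.ofLp_toLp, h, ite_mul,
    Finset.sum_ite_eq', conj_trivial]
  ring

lemma inner_bv (y : EuclideanSpace ℝ (Fin ℓ ⊕ Fin ℓ)) :
    ⟪y, bv πh⟫ = ∑ t, y (Sum.inl t) + ∑ s, πh s * y (Sum.inr s) := by
  rw [PiLp.inner_apply, Fintype.sum_sum_type]
  simp only [RCLike.inner_apply, conj_trivial, bv, WithLp.equiv_symm_apply, WithLp.ofLp_toLp, Sum.elim_inl,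
    Sum.elim_inr, mul_one]
  ring_nf

end Stmt8Aux

open Finset


/-- Farkas-type feasibility criterion: a stochastic matrix P̂ with stationary vector π̂
and support contained in L exists iff there are no vectors u, v with
u(t) + v(s)π̂(t) ≥ 0 whenever L(t,s) = 1 and Σ_r (u(r) + π̂(r)v(r)) < 0. -/
theorem stmt8 {ℓ : ℕ} (hℓ : 1 ≤ ℓ)
    (πh : Fin ℓ → ℝ) (hpos : ∀ i, 0 < πh i) (hsum : ∑ i, πh i = 1)
    (L : Fin ℓ → Fin ℓ → Bool) :
    (∃ Ph : Fin ℓ → Fin ℓ → ℝ,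
      (∀ t s, 0 ≤ Ph t s) ∧ (∀ t, ∑ s, Ph t s = 1) ∧
      (∀ s, ∑ t, πh t * Ph t s = πh s) ∧
      (∀ t s, L t s = false → Ph t s = 0)) ↔
    ¬ ∃ u v : Fin ℓ → ℝ,
      (∀ t s, L t s = true → 0 ≤ u t + v s * πh t) ∧
      (∑ r, (u r + πh r * v r) < 0) := by
  constructor
  · rintro ⟨Ph, hnn, hrow, hstat, hsupp⟩ ⟨u, v, hin, hneg⟩
    have key : ∑ r, (u r + πh r * v r) = ∑ t, ∑ s, Ph t s * (u t + v s * πh t) := by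
      have h1 : ∑ t, ∑ s, Ph t s * u t = ∑ r, u r :=
        Finset.sum_congr rfl fun t _ => by rw [← Finset.sum_mul, hrow t, one_mul]
      have h2 : ∑ t, ∑ s, Ph t s * (v s * πh t) = ∑ r, πh r * v r := by
        rw [Finset.sum_comm]
        refine Finset.sum_congr rfl fun s _ => ?_
        have : ∑ t, Ph t s * (v s * πh t) = v s * ∑ t, πh t * Ph t s := by
          rw [Finset.mul_sum]; exact Finset.sum_congr rfl fun t _ => by ring
        rw [this, hstat s, mul_comm]
      calc ∑ r, (u r + πh r * v r) = (∑ r, u r) + ∑ r, πh r * v r := Finset.sum_add_distrib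
        _ = (∑ t, ∑ s, Ph t s * u t) + ∑ t, ∑ s, Ph t s * (v s * πh t) := by rw [h1, h2]
        _ = ∑ t, ∑ s, Ph t s * (u t + v s * πh t) := by
            rw [← Finset.sum_add_distrib]
            refine Finset.sum_congr rfl fun t _ => ?_
            rw [← Finset.sum_add_distrib]
            exact Finset.sum_congr rfl fun s _ => by ring
    have hge : 0 ≤ ∑ t, ∑ s, Ph t s * (u t + v s * πh t) := by
      refine Finset.sum_nonneg fun t _ => Finset.sum_nonneg fun s _ => ?_
      by_cases h : L t s
      · exact mul_nonneg (hnn t s) (hin t s h)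
      · rw [hsupp t s (by simpa using h), zero_mul]
    rw [key] at hneg; linarith
  · intro hno
    by_contra hPh
    have hbS : Stmt8Aux.bv πh ∉ closure ((Stmt8Aux.S πh L : Set (EuclideanSpace ℝ (Fin ℓ ⊕ Fin ℓ)))) :=
      fun hb => hPh (Stmt8Aux.crux πh L hb)
    obtain ⟨y, h1, h2⟩ :=
      ProperCone.hyperplane_separation' (x₀ := Stmt8Aux.bv πh)
        ({ carrier := closure ((Stmt8Aux.S πh L : Set (EuclideanSpace ℝ (Fin ℓ ⊕ Fin ℓ))))
           zero_mem' := subset_closure ⟨0, fun p => le_refl 0, map_zero _⟩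
           add_mem' := fun ha hb => (Stmt8Aux.S πh L).closure.add_mem ha hb
           smul_mem' := fun c x hx => by
             rcases eq_or_lt_of_le c.2 with h | h
             · have hc : c = 0 := by ext; exact h.symm
               subst hc; rw [zero_smul]
               exact subset_closure ⟨0, fun p => le_refl 0, map_zero _⟩
             · have := (Stmt8Aux.S πh L).closure.smul_mem h hx
               exact this
           isClosed' := isClosed_closure } : ProperCone ℝ (EuclideanSpace ℝ (Fin ℓ ⊕ Fin ℓ)))
        hbS
    rw [real_inner_comm] at h2
    refine hno ⟨fun t => y (Sum.inl t), fun s => y (Sum.inr s), ?_, ?_⟩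
    · intro t s hts
      have := h1 _ (subset_closure (Stmt8Aux.cv_mem_S πh L t s))
      rw [Stmt8Aux.inner_cv πh L y hts] at this
      linarith
    · rw [Stmt8Aux.inner_bv πh y] at h2
      calc ∑ r, (y (Sum.inl r) + πh r * y (Sum.inr r))
          = (∑ r, y (Sum.inl r)) + ∑ r, πh r * y (Sum.inr r) := Finset.sum_add_distrib
        _ < 0 := h2
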